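/- Let 𝒫 be a finite set of maps from ℝ^n to ℝ^n, each of which is a paracontraction with respect to a fixed norm ‖·‖ on ℝ^n, and suppose all maps in 𝒫 share at least one common fixed point. Let P_1, P_2, … be an arbitrary sequence of maps drawn from 𝒫 and define the iteration x(t+1) = P_t(x(t)) for t ≥ 1 from an arbitrary initial vector x(1) ∈ ℝ^n. Then x(t) converges as t → ∞ to a point which is a common fixed point of all those maps in 𝒫 that occur infinitely often in the sequence P_1, P_2, …. -/

import Mathlib

open Filter Topology Finset
open scoped ENNReal

def IsNormOn {E : Type*} [AddCommGroup E] [Module ℝ E] (N : E → ℝ) : Prop :=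
  (∀ x, N x = 0 ↔ x = 0) ∧
  (∀ (c : ℝ) (x : E), N (c • x) = |c| * N x) ∧
  (∀ x y : E, N (x + y) ≤ N x + N y)

def IsParacontraction {E : Type*} [AddCommGroup E] [Module ℝ E] [TopologicalSpace E]
    (N : E → ℝ) (P : E → E) : Prop :=
  Continuous P ∧ ∀ x y : E, P x ≠ x → P y = y → N (P x - y) < N (x - y)

def QuasiNonexpansive {E : Type*} [AddCommGroup E] (N : E → ℝ) (P : E → E) : Prop :=
  ∀ x y : E, P y = y → N (P x - y) ≤ N (x - y)

noncomputable def pnorm {n : ℕ} (p : ℝ) (x : Fin n → ℝ) : ℝ :=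
  (∑ i, |x i| ^ p) ^ (1 / p)

noncomputable def pnormE {n : ℕ} (p : ℝ≥0∞) (x : Fin n → ℝ) : ℝ :=
  if p = ⊤ then ⨆ i, |x i| else (∑ i, |x i| ^ p.toReal) ^ (1 / p.toReal)

noncomputable def mixed22 {m n : ℕ} (x : Fin m → Fin n → ℝ) : ℝ :=
  pnorm 2 (fun i => pnorm 2 (x i))

noncomputable def mixedPInf {m n : ℕ} (p : ℝ) (x : Fin m → Fin n → ℝ) : ℝ :=
  ⨆ i, pnorm p (x i)

noncomputable def mixedEInf {m n : ℕ} (p : ℝ≥0∞) (x : Fin m → Fin n → ℝ) : ℝ :=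
  ⨆ i, pnormE p (x i)

def IsStochastic {m : ℕ} (S : Matrix (Fin m) (Fin m) ℝ) : Prop :=
  (∀ i j, 0 ≤ S i j) ∧ ∀ i, ∑ j, S i j = 1

def IsDoublyStochastic {m : ℕ} (S : Matrix (Fin m) (Fin m) ℝ) : Prop :=
  IsStochastic S ∧ ∀ j, ∑ i, S i j = 1

def kron {m n : ℕ} (S : Matrix (Fin m) (Fin m) ℝ) (x : Fin m → Fin n → ℝ) :
    Fin m → Fin n → ℝ :=
  fun i => ∑ j, S i j • x j

def stackMap {m n : ℕ} (M : Fin m → (Fin n → ℝ) → (Fin n → ℝ)) :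
    (Fin m → Fin n → ℝ) → (Fin m → Fin n → ℝ) :=
  fun x i => M i (x i)

def consensusSet (m n : ℕ) : Set (Fin m → Fin n → ℝ) :=
  {x | ∀ i j : Fin m, x i = x j}

def StronglyConnected {V : Type*} (G : V → V → Prop) : Prop :=
  ∀ i j : V, Relation.ReflTransGen G i j

def graphComp {V : Type*} (Gq Gp : V → V → Prop) : V → V → Prop :=
  fun i j => ∃ k, Gp i k ∧ Gq k j

def composeChain {m : ℕ} (G : ℕ → Fin m → Fin m → Prop) (a : ℕ) :
    ℕ → (Fin m → Fin m → Prop)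
  | 0 => G a
  | k + 1 => graphComp (G (a + (k + 1))) (composeChain G a k)

def mapChain {α : Type*} (F : ℕ → α → α) : ℕ → α → α
  | 0 => id
  | k + 1 => F (k + 1) ∘ mapChain F k

noncomputable def Phi {m : ℕ} (S : ℕ → Matrix (Fin m) (Fin m) ℝ) (τ t : ℕ) :
    Matrix (Fin m) (Fin m) ℝ :=
  (List.range (t - τ)).foldl (fun A k => S (τ + k + 1) * A) 1

section NormFacts

variable {n : ℕ} {N : (Fin n → ℝ) → ℝ}

lemma IsNormOn.zero (hN : IsNormOn N) : N 0 = 0 := (hN.1 0).mpr rfl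

lemma IsNormOn.neg' (hN : IsNormOn N) (x : Fin n → ℝ) : N (-x) = N x := by
  have := hN.2.1 (-1) x
  simpa using this

lemma IsNormOn.nonneg (hN : IsNormOn N) (x : Fin n → ℝ) : 0 ≤ N x := by
  have h := hN.2.2 x (-x)
  rw [add_neg_cancel, hN.zero, hN.neg' x] at h
  linarith

lemma IsNormOn.sum_le {ι : Type*} (hN : IsNormOn N) (s : Finset ι) (f : ι → Fin n → ℝ) :
    N (∑ i ∈ s, f i) ≤ ∑ i ∈ s, N (f i) := by
  induction s using Finset.cons_induction with
  | empty => simp [hN.zero]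
  | cons a s ha ih =>
    rw [Finset.sum_cons, Finset.sum_cons]
    exact le_trans (hN.2.2 _ _) (by linarith)

lemma IsNormOn.exists_bound (hN : IsNormOn N) : ∃ C : ℝ, 0 ≤ C ∧ ∀ x, N x ≤ C * ‖x‖ := by
  refine ⟨∑ i, N (Pi.single i (1 : ℝ)), Finset.sum_nonneg fun i _ => hN.nonneg _, fun x => ?_⟩
  have hx : x = ∑ i, Pi.single i (x i) := (Finset.univ_sum_single x).symm
  calc N x ≤ ∑ i, N (Pi.single i (x i)) := by
        conv_lhs => rw [hx]
        exact hN.sum_le _ _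
    _ ≤ ∑ i, N (Pi.single i (1 : ℝ)) * ‖x‖ := by
        refine Finset.sum_le_sum fun i _ => ?_
        have h1 : Pi.single i (x i) = x i • (Pi.single i (1 : ℝ) : Fin n → ℝ) := by
          rw [← Pi.single_smul, smul_eq_mul, mul_one]
        rw [h1, hN.2.1]
        have h2 : |x i| ≤ ‖x‖ := by
          simpa [Real.norm_eq_abs] using norm_le_pi_norm x i
        have := hN.nonneg (Pi.single i (1 : ℝ))
        rw [mul_comm]
        exact mul_le_mul_of_nonneg_left h2 this
    _ = (∑ i, N (Pi.single i (1 : ℝ))) * ‖x‖ := by rw [← Finset.sum_mul]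

lemma IsNormOn.abs_sub_le (hN : IsNormOn N) (a b : Fin n → ℝ) : |N a - N b| ≤ N (a - b) := by
  rw [abs_sub_le_iff]
  constructor
  · have := hN.2.2 (a - b) b; simpa using this
  · have := hN.2.2 (b - a) a
    rw [sub_add_cancel] at this
    have hneg : N (b - a) = N (a - b) := by rw [← hN.neg' (a - b)]; congr 1; abel
    linarith

lemma IsNormOn.continuous (hN : IsNormOn N) : Continuous N := by
  obtain ⟨C, hC0, hC⟩ := hN.exists_bound
  refine (LipschitzWith.of_dist_le_mul (K := ⟨C, hC0⟩) fun a b => ?_).continuous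
  rw [Real.dist_eq, dist_eq_norm]
  exact le_trans (hN.abs_sub_le a b) (hC _)

lemma IsNormOn.exists_lower (hN : IsNormOn N) : ∃ c : ℝ, 0 < c ∧ ∀ x, c * ‖x‖ ≤ N x := by
  by_cases hsub : ∀ x : Fin n → ℝ, x = 0
  · exact ⟨1, one_pos, fun x => by rw [hsub x]; simp [hN.zero]⟩
  · push_neg at hsub
    obtain ⟨x₀, hx₀⟩ := hsub
    have : Nontrivial (Fin n → ℝ) := nontrivial_of_ne x₀ 0 hx₀
    have hsph : (Metric.sphere (0 : Fin n → ℝ) 1).Nonempty :=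
      NormedSpace.sphere_nonempty.mpr zero_le_one
    obtain ⟨w, hw, hmin⟩ := (isCompact_sphere (0 : Fin n → ℝ) 1).exists_isMinOn hsph
      hN.continuous.continuousOn
    have hwne : w ≠ 0 := by
      intro h
      rw [Metric.mem_sphere, dist_zero_right, h, norm_zero] at hw
      norm_num at hw
    have hNw : 0 < N w := lt_of_le_of_ne (hN.nonneg w) (fun h => hwne ((hN.1 w).mp h.symm))
    refine ⟨N w, hNw, fun v => ?_⟩
    rcases eq_or_ne v 0 with rfl | hv
    · simp [hN.zero]
    · have hnv : ‖v‖ ≠ 0 := norm_ne_zero_iff.mpr hv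
      have hmem : ‖v‖⁻¹ • v ∈ Metric.sphere (0 : Fin n → ℝ) 1 := by
        rw [Metric.mem_sphere, dist_zero_right, norm_smul, norm_inv, norm_norm,
          inv_mul_cancel₀ hnv]
      have hscale : N v = ‖v‖ * N (‖v‖⁻¹ • v) := by
        rw [hN.2.1, abs_inv, abs_norm, ← mul_assoc, mul_inv_cancel₀ hnv, one_mul]
      calc N w * ‖v‖ ≤ N (‖v‖⁻¹ • v) * ‖v‖ :=
            mul_le_mul_of_nonneg_right (hmin hmem) (norm_nonneg v)
        _ = N v := by rw [hscale, mul_comm]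

end NormFacts

lemma pigeon_infinite {α : Type*} (Ps : Set α) (hfin : Ps.Finite) (P : ℕ → α)
    (hP : ∀ t, P t ∈ Ps) (s : Set ℕ) (hs : s.Infinite) :
    ∃ Q ∈ Ps, {t | t ∈ s ∧ P t = Q}.Infinite := by
  by_contra h
  push_neg at h
  have hsub : s ⊆ ⋃ Q ∈ Ps, {t | t ∈ s ∧ P t = Q} := by
    intro t ht
    exact Set.mem_biUnion (hP t) ⟨ht, rfl⟩
  exact hs (Set.Finite.subset (Set.Finite.biUnion hfin fun Q hQ =>
    h Q hQ) hsub)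

lemma exists_tendsto_mem (s : Set ℕ) (hs : s.Infinite) :
    ∃ u : ℕ → ℕ, (∀ j, u j ∈ s) ∧ Filter.Tendsto u Filter.atTop Filter.atTop := by
  have h : ∀ j : ℕ, ∃ b ∈ s, j < b := hs.exists_gt
  choose u hu hlt using h
  exact ⟨u, hu, tendsto_atTop_mono (fun j => (hlt j).le) tendsto_id⟩

theorem stmt0 {n : ℕ} (N : (Fin n → ℝ) → ℝ) (hN : IsNormOn N)
    (Ps : Set ((Fin n → ℝ) → (Fin n → ℝ))) (hfin : Ps.Finite)
    (hpc : ∀ P ∈ Ps, IsParacontraction N P)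
    (hcommon : ∃ y, ∀ P ∈ Ps, P y = y)
    (P : ℕ → (Fin n → ℝ) → (Fin n → ℝ)) (hP : ∀ t, P t ∈ Ps)
    (x : ℕ → Fin n → ℝ) (hx : ∀ t, 1 ≤ t → x (t + 1) = P t (x t)) :
    ∃ z : Fin n → ℝ, Tendsto x atTop (𝓝 z) ∧
      ∀ Q ∈ Ps, {t : ℕ | 1 ≤ t ∧ P t = Q}.Infinite → Q z = z := by
  classical
  obtain ⟨y, hy⟩ := hcommon
  obtain ⟨c, hc0, hc⟩ := hN.exists_lower
  have hNcont : Continuous N := hN.continuous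
  -- one-step quasi-nonexpansiveness
  have qne : ∀ t, 1 ≤ t → ∀ w, P t w = w → N (x (t + 1) - w) ≤ N (x t - w) := by
    intro t ht w hw
    rw [hx t ht]
    rcases eq_or_ne (P t (x t)) (x t) with h | h
    · rw [h]
    · exact le_of_lt ((hpc _ (hP t)).2 _ _ h hw)
  -- chained nonexpansiveness
  have step_chain : ∀ (w : Fin n → ℝ) (a b : ℕ), 1 ≤ a → a ≤ b →
      (∀ t, a ≤ t → t < b → P t w = w) → N (x b - w) ≤ N (x a - w) := by
    intro w a b ha hab hfix
    induction b, hab using Nat.le_induction with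
    | base => exact le_refl _
    | succ b hab ih =>
      have h1 : N (x b - w) ≤ N (x a - w) :=
        ih (fun t h1 h2 => hfix t h1 (by omega))
      have h2 : N (x (b + 1) - w) ≤ N (x b - w) :=
        qne b (by omega) w (hfix b hab (by omega))
      linarith
  -- convergence of N (x t - y)
  have anti : Antitone fun t => N (x (t + 1) - y) := by
    intro s t hst
    exact step_chain y (s + 1) (t + 1) (by omega) (by omega) (fun r _ _ => hy _ (hP r))
  have hbdd : BddBelow (Set.range fun t => N (x (t + 1) - y)) :=
    ⟨0, fun v ⟨t, ht⟩ => ht ▸ hN.nonneg _⟩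
  set L := ⨅ t, N (x (t + 1) - y) with hLdef
  have hL1 : Tendsto (fun t => N (x (t + 1) - y)) atTop (𝓝 L) := tendsto_atTop_ciInf anti hbdd
  have hLx : Tendsto (fun t => N (x t - y)) atTop (𝓝 L) :=
    (tendsto_add_atTop_iff_nat 1).mp hL1
  -- boundedness of the trajectory
  have hbound : ∀ t, x t ∈ Metric.closedBall y ((max (N (x 0 - y)) (N (x 1 - y))) / c) := by
    intro t
    rw [Metric.mem_closedBall, dist_eq_norm]
    rw [le_div_iff₀ hc0, mul_comm]
    rcases Nat.eq_zero_or_pos t with rfl | ht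
    · exact le_trans (hc _) (le_max_left _ _)
    · refine le_trans (hc _) (le_trans ?_ (le_max_right _ _))
      exact step_chain y 1 t le_rfl ht (fun r _ _ => hy _ (hP r))
  obtain ⟨z, -, φ, hφmono, hφtend⟩ :=
    tendsto_subseq_of_bounded Metric.isBounded_closedBall hbound
  have hφatTop : Tendsto φ atTop atTop := hφmono.tendsto_atTop
  -- convergence criterion via N
  have tendsto_of_N : ∀ (w : Fin n → ℝ) (f : ℕ → Fin n → ℝ),
      Tendsto (fun j => N (f j - w)) atTop (𝓝 0) → Tendsto f atTop (𝓝 w) := by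
    intro w f h
    rw [tendsto_iff_norm_sub_tendsto_zero]
    refine squeeze_zero (g := fun j => N (f j - w) / c) (fun j => norm_nonneg _)
      (fun j => (le_div_iff₀ hc0).mpr (by rw [mul_comm]; exact hc _)) ?_
    simpa using h.div_const c
  -- N along convergent subsequences
  have Ntend : ∀ (w : Fin n → ℝ) (f : ℕ → Fin n → ℝ) (a : Fin n → ℝ),
      Tendsto f atTop (𝓝 a) → Tendsto (fun j => N (f j - w)) atTop (𝓝 (N (a - w))) := by
    intro w f a hf
    exact ((hNcont.comp (continuous_sub_right w)).tendsto a).comp hf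
  -- Lemma A
  have lemA : ∀ (R : (Fin n → ℝ) → (Fin n → ℝ)) (u : ℕ → ℕ), R ∈ Ps → (∀ j, 1 ≤ u j) →
      (∀ j, P (u j) = R) → Tendsto u atTop atTop →
      Tendsto (fun j => x (u j)) atTop (𝓝 z) → R z = z := by
    intro R u hR h1 hPu huT hxu
    by_contra hne
    have e1 : N (z - y) = L :=
      tendsto_nhds_unique (Ntend y _ z hxu) (hLx.comp huT)
    have hxu1 : Tendsto (fun j => x (u j + 1)) atTop (𝓝 (R z)) := by
      have : (fun j => x (u j + 1)) = fun j => R (x (u j)) := by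
        funext j; rw [hx (u j) (h1 j), hPu j]
      rw [this]
      exact (((hpc R hR).1).tendsto z).comp hxu
    have huT1 : Tendsto (fun j => u j + 1) atTop atTop :=
      tendsto_atTop_mono (fun j => Nat.le_succ (u j)) huT
    have e2 : N (R z - y) = L :=
      tendsto_nhds_unique (Ntend y _ (R z) hxu1) (hLx.comp huT1)
    have hlt : N (R z - y) < N (z - y) := (hpc R hR).2 z y hne (hy R hR)
    rw [e1, e2] at hlt
    exact lt_irrefl _ hlt
  -- shifted subsequence with indices ≥ 1
  set ψ : ℕ → ℕ := fun k => φ (k + 1) with hψdef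
  have hψ1 : ∀ k, 1 ≤ ψ k := fun k => le_trans (Nat.succ_le_succ (Nat.zero_le k)) hφmono.le_apply
  have hψtend : Tendsto (fun k => x (ψ k)) atTop (𝓝 z) :=
    (tendsto_add_atTop_iff_nat 1).mpr hφtend
  have hψatTop : Tendsto ψ atTop atTop :=
    (tendsto_add_atTop_iff_nat 1).mpr hφatTop
  -- N (x (ψ k) - z) → 0
  have hψ0 : Tendsto (fun k => N (x (ψ k) - z)) atTop (𝓝 0) := by
    have := Ntend z _ z hψtend
    rwa [sub_self, hN.zero] at this
  -- the bad set is finite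
  set S : Set ℕ := {t | 1 ≤ t ∧ P t z ≠ z} with hSdef
  have hSfin : S.Finite := by
    by_contra hSinf
    have hSinf : S.Infinite := hSinf
    have hex : ∀ k : ℕ, ∃ b, b ∈ S ∧ ψ k ≤ b := by
      intro k
      obtain ⟨b, hb, hlt⟩ := hSinf.exists_gt (ψ k)
      exact ⟨b, hb, hlt.le⟩
    set m : ℕ → ℕ := fun k => Nat.find (hex k) with hmdef
    have hmS : ∀ k, m k ∈ S := fun k => (Nat.find_spec (hex k)).1
    have hmge : ∀ k, ψ k ≤ m k := fun k => (Nat.find_spec (hex k)).2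
    have hmin : ∀ k t, ψ k ≤ t → t < m k → t ∉ S := by
      intro k t h1 h2 hmem
      exact Nat.find_min (hex k) h2 ⟨hmem, h1⟩
    -- N (x (m k) - z) ≤ N (x (ψ k) - z)
    have hle : ∀ k, N (x (m k) - z) ≤ N (x (ψ k) - z) := by
      intro k
      refine step_chain z (ψ k) (m k) (hψ1 k) (hmge k) ?_
      intro t h1 h2
      have ht1 : 1 ≤ t := le_trans (hψ1 k) h1
      have := hmin k t h1 h2
      rw [hSdef] at this
      simp only [Set.mem_setOf_eq, not_and, not_not] at this
      exact this ht1
    have hm0 : Tendsto (fun k => N (x (m k) - z)) atTop (𝓝 0) :=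
      squeeze_zero (fun k => hN.nonneg _) hle hψ0
    have hmz : Tendsto (fun k => x (m k)) atTop (𝓝 z) := tendsto_of_N z _ hm0
    have hmatTop : Tendsto m atTop atTop :=
      tendsto_atTop_mono hmge hψatTop
    -- pigeonhole on the maps at bad times
    obtain ⟨Q, hQ, hQinf⟩ := pigeon_infinite Ps hfin (fun k => P (m k)) (fun k => hP _)
      Set.univ Set.infinite_univ
    obtain ⟨u, hu, huT⟩ := exists_tendsto_mem _ hQinf
    have hQz : Q z = z :=
      lemA Q (fun j => m (u j)) hQ (fun j => (hmS (u j)).1) (fun j => (hu j).2)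
        (hmatTop.comp huT) (hmz.comp huT)
    have hbad := (hmS (u 0)).2
    rw [(hu 0).2] at hbad
    exact hbad hQz
  -- get a tail where z is fixed
  obtain ⟨T, hT⟩ : ∃ T : ℕ, ∀ t, T ≤ t → t ∉ S := by
    obtain ⟨B, hB⟩ := hSfin.bddAbove
    exact ⟨B + 1, fun t ht hmem => by have := hB hmem; omega⟩
  have hTfix : ∀ t, max T 1 ≤ t → P t z = z := by
    intro t ht
    have h1 : 1 ≤ t := le_trans (le_max_right T 1) ht
    have h2 : t ∉ S := hT t (le_trans (le_max_left T 1) ht)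
    rw [hSdef] at h2
    simp only [Set.mem_setOf_eq, not_and, not_not] at h2
    exact h2 h1
  -- N (x t - z) → 0
  have hNz : Tendsto (fun t => N (x t - z)) atTop (𝓝 0) := by
    rw [Metric.tendsto_atTop]
    intro ε hε
    obtain ⟨k, hk1, hk2⟩ := ((hψ0.eventually_lt_const hε).and
      (hψatTop.eventually_ge_atTop (max T 1))).exists
    refine ⟨ψ k, fun t ht => ?_⟩
    rw [Real.dist_eq, sub_zero, abs_of_nonneg (hN.nonneg _)]
    refine lt_of_le_of_lt ?_ hk1
    exact step_chain z (ψ k) t (hψ1 k) ht (fun r hr1 _ => hTfix r (le_trans hk2 hr1))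
  have hxz : Tendsto x atTop (𝓝 z) := tendsto_of_N z x hNz
  refine ⟨z, hxz, ?_⟩
  intro Q hQ hinf
  obtain ⟨u, hu, huT⟩ := exists_tendsto_mem _ hinf
  have h1 : Tendsto (fun j => x (u j + 1)) atTop (𝓝 (Q z)) := by
    have heq : (fun j => x (u j + 1)) = fun j => Q (x (u j)) := by
      funext j; rw [hx (u j) (hu j).1, (hu j).2]
    rw [heq]
    exact (((hpc Q hQ).1).tendsto z).comp (hxz.comp huT)
  have h2 : Tendsto (fun j => x (u j + 1)) atTop (𝓝 z) :=
    hxz.comp (tendsto_atTop_mono (fun j => Nat.le_succ (u j)) huT)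
  exact tendsto_nhds_unique h1 h2
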